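/- Let g : ℝ → ℝ be differentiable with g′(x) ≥ κ for all x ∈ ℝ, where κ > 0. Let λ > 0, let z_1, …, z_n ∈ ℝ^d, and let ω_1, …, ω_n ≥ 0. Define the score function G(θ) := λ θ + Σ_{s=1}^n ω_s g(θᵀ z_s) z_s and the matrix V := λ I_d + κ Σ_{s=1}^n ω_s z_s z_sᵀ. Then for all θ_1, θ_2 ∈ ℝ^d, ‖G(θ_1) − G(θ_2)‖_{V⁻¹} ≥ ‖θ_1 − θ_2‖_V. -/

import Mathlib

open Matrix

/-- The matrix-weighted (semi)norm `‖x‖_A = √(xᵀ A x)`. -/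
noncomputable def mnorm {d : ℕ} (A : Matrix (Fin d) (Fin d) ℝ) (x : Fin d → ℝ) : ℝ :=
  Real.sqrt (x ⬝ᵥ A.mulVec x)

private lemma cs_dot {d : ℕ} (u w : Fin d → ℝ) :
    u ⬝ᵥ w ≤ Real.sqrt (u ⬝ᵥ u) * Real.sqrt (w ⬝ᵥ w) := by
  have h := Finset.sum_mul_sq_le_sq_mul_sq Finset.univ u w
  have h1 : u ⬝ᵥ w ≤ |u ⬝ᵥ w| := le_abs_self _
  have h2 : |u ⬝ᵥ w| = Real.sqrt ((u ⬝ᵥ w) ^ 2) := (Real.sqrt_sq_eq_abs _).symm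
  have h3 : Real.sqrt ((u ⬝ᵥ w) ^ 2)
      ≤ Real.sqrt ((∑ i, u i ^ 2) * ∑ i, w i ^ 2) := by
    apply Real.sqrt_le_sqrt
    simpa [dotProduct] using h
  have h4 : Real.sqrt ((∑ i, u i ^ 2) * ∑ i, w i ^ 2)
      = Real.sqrt (u ⬝ᵥ u) * Real.sqrt (w ⬝ᵥ w) := by
    rw [Real.sqrt_mul (by positivity)]
    simp [dotProduct, sq]
  linarith [h1, h2 ▸ h3.trans_eq h4]

private lemma slope_ge {g : ℝ → ℝ} (hg : Differentiable ℝ g) {κ : ℝ}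
    (hderiv : ∀ x : ℝ, κ ≤ deriv g x) (a b : ℝ) :
    κ * (a - b) ^ 2 ≤ (g a - g b) * (a - b) := by
  set h : ℝ → ℝ := fun t => g t - κ * t with hh
  have hdiff : Differentiable ℝ h := hg.sub (differentiable_id.const_mul κ)
  have hmono : Monotone h := by
    apply monotone_of_deriv_nonneg hdiff
    intro t
    have hd : deriv h t = deriv g t - κ := by
      have := ((hg t).hasDerivAt.sub ((hasDerivAt_id t).const_mul κ)).deriv
      simp only [id_eq, mul_one] at this; exact this
    rw [hd]
    linarith [hderiv t]
  rcases le_total a b with hab | hab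
  · have := hmono hab
    simp only [hh] at this
    nlinarith
  · have := hmono hab
    simp only [hh] at this
    nlinarith

private lemma dot_sum_mulVec {k d : ℕ} (u v : Fin d → ℝ)
    (M : Fin k → Matrix (Fin d) (Fin d) ℝ) :
    u ⬝ᵥ (∑ s, M s) *ᵥ v = ∑ s, u ⬝ᵥ (M s) *ᵥ v := by
  simp only [mulVec, dotProduct, Matrix.sum_apply, Finset.sum_mul, Finset.mul_sum]
  calc (∑ x : Fin d, ∑ c : Fin d, ∑ i : Fin k, u x * (M i x c * v c))
      = ∑ x : Fin d, ∑ i : Fin k, ∑ c : Fin d, u x * (M i x c * v c) :=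
        Finset.sum_congr rfl fun x _ => Finset.sum_comm
    _ = ∑ i : Fin k, ∑ x : Fin d, ∑ c : Fin d, u x * (M i x c * v c) := Finset.sum_comm

private lemma dot_vecMulVec_mulVec {d : ℕ} (c : ℝ) (u v zz : Fin d → ℝ) :
    u ⬝ᵥ (c • vecMulVec zz zz) *ᵥ v = c * ((u ⬝ᵥ zz) * (zz ⬝ᵥ v)) := by
  simp only [mulVec, dotProduct, vecMulVec_apply, Matrix.smul_apply, smul_eq_mul,
    Finset.mul_sum, Finset.sum_mul]
  rw [Finset.sum_comm]
  exact Finset.sum_congr rfl fun i _ => Finset.sum_congr rfl fun j _ => by ring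

private lemma dot_sum_smul {d k : ℕ} (x : Fin d → ℝ) (c : Fin k → ℝ)
    (z : Fin k → Fin d → ℝ) :
    x ⬝ᵥ (∑ s, c s • z s) = ∑ s, c s * (x ⬝ᵥ z s) := by
  simp only [dotProduct, Finset.sum_apply, Pi.smul_apply, smul_eq_mul, Finset.mul_sum]
  rw [Finset.sum_comm]
  exact Finset.sum_congr rfl fun s _ => Finset.sum_congr rfl fun i _ => by ring

/-- **Strong monotonicity of the regularized weighted score function.**
If `g` is differentiable with `g′ ≥ κ > 0`, `G(θ) = λθ + ∑ ω_s g(θᵀ z_s) z_s`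
and `V = λ I + κ ∑ ω_s z_s z_sᵀ`, then
`‖G(θ₁) − G(θ₂)‖_{V⁻¹} ≥ ‖θ₁ − θ₂‖_V` for all `θ₁, θ₂`. -/
theorem score_strong_monotonicity (d n : ℕ) (g : ℝ → ℝ) (hg : Differentiable ℝ g)
    (κ : ℝ) (hκ : 0 < κ) (hderiv : ∀ x : ℝ, κ ≤ deriv g x)
    (lam : ℝ) (hlam : 0 < lam)
    (z : Fin n → Fin d → ℝ) (ω : Fin n → ℝ) (hω : ∀ s, 0 ≤ ω s) :
    ∀ θ₁ θ₂ : Fin d → ℝ,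
      mnorm (lam • (1 : Matrix (Fin d) (Fin d) ℝ)
          + κ • ∑ s, ω s • Matrix.vecMulVec (z s) (z s)) (θ₁ - θ₂)
      ≤ mnorm ((lam • (1 : Matrix (Fin d) (Fin d) ℝ)
          + κ • ∑ s, ω s • Matrix.vecMulVec (z s) (z s))⁻¹)
        ((lam • θ₁ + ∑ s, (ω s * g (θ₁ ⬝ᵥ z s)) • z s)
          - (lam • θ₂ + ∑ s, (ω s * g (θ₂ ⬝ᵥ z s)) • z s)) := by
  intro θ₁ θ₂
  set V : Matrix (Fin d) (Fin d) ℝ :=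
    lam • (1 : Matrix (Fin d) (Fin d) ℝ) + κ • ∑ s, ω s • Matrix.vecMulVec (z s) (z s) with hV
  set x : Fin d → ℝ := θ₁ - θ₂ with hx
  set y : Fin d → ℝ := (lam • θ₁ + ∑ s, (ω s * g (θ₁ ⬝ᵥ z s)) • z s)
      - (lam • θ₂ + ∑ s, (ω s * g (θ₂ ⬝ᵥ z s)) • z s) with hy
  -- quadratic form formula
  have hquad : ∀ u v : Fin d → ℝ,
      u ⬝ᵥ V.mulVec v = lam * (u ⬝ᵥ v) + κ * ∑ s, ω s * ((u ⬝ᵥ z s) * (z s ⬝ᵥ v)) := by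
    intro u v
    rw [hV]
    rw [add_mulVec, smul_mulVec, one_mulVec, dotProduct_add, dotProduct_smul,
      smul_eq_mul, smul_mulVec, dotProduct_smul, smul_eq_mul]
    congr 1
    congr 1
    rw [dot_sum_mulVec]
    exact Finset.sum_congr rfl fun s _ => dot_vecMulVec_mulVec _ _ _ _
  -- symmetry of V
  have hVsym : Vᵀ = V := by
    rw [hV]
    simp only [transpose_add, transpose_smul, transpose_one, Matrix.transpose_sum]
    congr 2
    apply Finset.sum_congr rfl
    intro s _
    ext i j
    simp [vecMulVec_apply, mul_comm]
  -- V positive definite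
  have hVpd : V.PosDef := by
    refine Matrix.PosDef.of_dotProduct_mulVec_pos ?_ ?_
    · show Vᴴ = V
      have hct : Vᴴ = Vᵀ := by ext i j; simp [conjTranspose_apply]
      rw [hct, hVsym]
    · intro v hv
      have hsv : star v = v := by simp
      rw [hsv, hquad]
      have h1 : 0 < v ⬝ᵥ v := by
        have he : v ⬝ᵥ v = ∑ i, v i ^ 2 := by simp [dotProduct, sq]
        rw [he]
        obtain ⟨i, hi⟩ := Function.ne_iff.mp hv
        exact Finset.sum_pos' (fun j _ => sq_nonneg _)
          ⟨i, Finset.mem_univ i, sq_pos_of_ne_zero hi⟩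
      have h2 : 0 ≤ ∑ s, ω s * ((v ⬝ᵥ z s) * (z s ⬝ᵥ v)) := by
        apply Finset.sum_nonneg
        intro s _
        rw [dotProduct_comm (z s) v]
        exact mul_nonneg (hω s) (mul_self_nonneg _)
      nlinarith
  have hdet : IsUnit V.det := hVpd.det_pos.ne'.isUnit
  have hVVinv : V * V⁻¹ = 1 := Matrix.mul_nonsing_inv V hdet
  -- step 1 : x ⬝ᵥ V x ≤ x ⬝ᵥ y
  have step1 : x ⬝ᵥ V.mulVec x ≤ x ⬝ᵥ y := by
    have hsub : y = lam • x + ∑ s, (ω s * (g (θ₁ ⬝ᵥ z s) - g (θ₂ ⬝ᵥ z s))) • z s := by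
      rw [hy, hx]
      funext i
      simp only [Pi.sub_apply, Pi.add_apply, Pi.smul_apply, Finset.sum_apply,
        smul_eq_mul, sub_mul, mul_sub, Finset.sum_sub_distrib]
      ring
    have hxy : x ⬝ᵥ y = lam * (x ⬝ᵥ x)
        + ∑ s, (ω s * (g (θ₁ ⬝ᵥ z s) - g (θ₂ ⬝ᵥ z s))) * (x ⬝ᵥ z s) := by
      rw [hsub, dotProduct_add, dotProduct_smul, smul_eq_mul, dot_sum_smul]
    rw [hxy, hquad, Finset.mul_sum]
    apply add_le_add le_rfl
    apply Finset.sum_le_sum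
    intro s _
    have hzx : θ₁ ⬝ᵥ z s - θ₂ ⬝ᵥ z s = x ⬝ᵥ z s := by
      rw [hx, sub_dotProduct]
    have hkey := slope_ge hg hderiv (θ₁ ⬝ᵥ z s) (θ₂ ⬝ᵥ z s)
    rw [hzx] at hkey
    rw [dotProduct_comm (z s) x]
    have := mul_le_mul_of_nonneg_left hkey (hω s)
    nlinarith
  -- factor V = Bᵀ B
  obtain ⟨B, hB⟩ : ∃ B : Matrix (Fin d) (Fin d) ℝ, V = Bᴴ * B := by
    open scoped MatrixOrder Matrix.Norms.L2Operator in
    obtain ⟨B, hB⟩ := CStarAlgebra.nonneg_iff_eq_star_mul_self.mp hVpd.posSemidef.nonneg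
    exact ⟨B, hB⟩
  have hBt : Bᴴ = Bᵀ := by ext i j; simp [conjTranspose_apply]
  have hfact : ∀ u v : Fin d → ℝ,
      u ⬝ᵥ V.mulVec v = (B.mulVec u) ⬝ᵥ (B.mulVec v) := by
    intro u v
    rw [hB, hBt, ← Matrix.mulVec_mulVec, Matrix.dotProduct_mulVec, Matrix.vecMul_transpose]
  -- step 2 : Cauchy–Schwarz
  set u : Fin d → ℝ := B.mulVec x with hu
  set w : Fin d → ℝ := B.mulVec (V⁻¹.mulVec y) with hw
  have hyid : V.mulVec (V⁻¹.mulVec y) = y := by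
    rw [Matrix.mulVec_mulVec, hVVinv, Matrix.one_mulVec]
  have hxyuw : x ⬝ᵥ y = u ⬝ᵥ w := by
    calc x ⬝ᵥ y = x ⬝ᵥ V.mulVec (V⁻¹.mulVec y) := by rw [hyid]
    _ = u ⬝ᵥ w := hfact x (V⁻¹.mulVec y)
  have huu : u ⬝ᵥ u = x ⬝ᵥ V.mulVec x := (hfact x x).symm
  have hww : w ⬝ᵥ w = y ⬝ᵥ V⁻¹.mulVec y := by
    have h1 : w ⬝ᵥ w = (V⁻¹.mulVec y) ⬝ᵥ V.mulVec (V⁻¹.mulVec y) :=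
      (hfact (V⁻¹.mulVec y) (V⁻¹.mulVec y)).symm
    rw [h1, hyid, dotProduct_comm]
  have step2 : x ⬝ᵥ y ≤ mnorm V x * mnorm V⁻¹ y := by
    rw [hxyuw]
    have hcs := cs_dot u w
    rwa [huu, hww] at hcs
  -- conclude
  have hnx : 0 ≤ x ⬝ᵥ V.mulVec x := by
    rw [← huu]
    exact Finset.sum_nonneg fun i _ => mul_self_nonneg _
  have hA2 : (mnorm V x) ^ 2 = x ⬝ᵥ V.mulVec x := Real.sq_sqrt hnx
  have hAnn : 0 ≤ mnorm V x := Real.sqrt_nonneg _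
  have hBnn : 0 ≤ mnorm V⁻¹ y := Real.sqrt_nonneg _
  rcases eq_or_lt_of_le hAnn with hA0 | hApos
  · rw [← hA0]; exact hBnn
  · nlinarith [hA2 ▸ (step1.trans step2)]
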